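/- Let A (n×n), B (n×m), C (p×n), K̄, K̲ (m×n), L̄, L̲ (n×p), E (n×q) with E ≥ 0 entrywise, and F (p×r) be real matrices. Let G = [[A + B(K̄ + K̲), BK̄, −BK̲], [0, A − L̄C, 0], [0, 0, A − L̲C]], let 𝟙 denote all-ones vectors of appropriate dimension, let d = (E𝟙, L̄F𝟙 − E𝟙, E𝟙 − L̲F𝟙) ∈ ℝ^{3n}, and let f : ℝ^{3n} → ℝ^{3n} be f(z) = Gz + d. Let X_e = {(x, ē, e̲) ∈ ℝ^{3n} : x ≥ 0, ē ≥ 0, 0 ≤ e̲ ≤ x}. Then the following are equivalent: (i) A + B(K̄ + K̲), A − L̄C, and A − L̲C are Schur stable, the six inequalities A + B(K̄ + K̲) ≥ 0, A + BK̄ ≥ 0, BK̄ ≥ 0, A − L̄C ≥ 0, A − L̲C ≥ 0, BK̄ + L̲C ≥ 0 hold, and L̄F𝟙 − E𝟙 ≥ 0, E𝟙 − L̲F𝟙 ≥ 0, L̲F𝟙 ≥ 0; (ii) X_e is invariant under f and there exists X* ∈ X_e such that for every z₀ ∈ X_e the iterates f^t(z₀) converge to X* as t → ∞. -/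

import Mathlib

open Matrix Filter

/-- A real square matrix is Schur stable if its spectral radius (computed over ℂ) is
strictly less than one. -/
def IsSchur {ι : Type*} [Fintype ι] [DecidableEq ι] (M : Matrix ι ι ℝ) : Prop :=
  spectralRadius ℂ (M.map (algebraMap ℝ ℂ)) < 1

/-- The error-coordinate closed-loop map `(x, ē, e̲) ↦ G (x, ē, e̲)` with
`G = [[A + B(K̄ + K̲), BK̄, −BK̲], [0, A − L̄C, 0], [0, 0, A − L̲C]]`. -/
def Gmap {n m p : ℕ}
    (A : Matrix (Fin n) (Fin n) ℝ) (B : Matrix (Fin n) (Fin m) ℝ)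
    (C : Matrix (Fin p) (Fin n) ℝ)
    (Ku Kl : Matrix (Fin m) (Fin n) ℝ) (Lu Ll : Matrix (Fin n) (Fin p) ℝ)
    (z : (Fin n → ℝ) × (Fin n → ℝ) × (Fin n → ℝ)) :
    (Fin n → ℝ) × (Fin n → ℝ) × (Fin n → ℝ) :=
  ((A + B * (Ku + Kl)) *ᵥ z.1 + (B * Ku) *ᵥ z.2.1 - (B * Kl) *ᵥ z.2.2,
   (A - Lu * C) *ᵥ z.2.1,
   (A - Ll * C) *ᵥ z.2.2)

/-- The constant term `d = (E𝟙, L̄F𝟙 − E𝟙, E𝟙 − L̲F𝟙)` of the expected error dynamics. -/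
def noiseOffset {n p q r : ℕ}
    (Lu Ll : Matrix (Fin n) (Fin p) ℝ)
    (E : Matrix (Fin n) (Fin q) ℝ) (F : Matrix (Fin p) (Fin r) ℝ) :
    (Fin n → ℝ) × (Fin n → ℝ) × (Fin n → ℝ) :=
  (E *ᵥ (fun _ => (1 : ℝ)),
   (Lu * F) *ᵥ (fun _ => (1 : ℝ)) - E *ᵥ (fun _ => (1 : ℝ)),
   E *ᵥ (fun _ => (1 : ℝ)) - (Ll * F) *ᵥ (fun _ => (1 : ℝ)))

/-- The affine expected error dynamics `f(z) = Gz + d`. -/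
def noisyMap {n m p q r : ℕ}
    (A : Matrix (Fin n) (Fin n) ℝ) (B : Matrix (Fin n) (Fin m) ℝ)
    (C : Matrix (Fin p) (Fin n) ℝ)
    (Ku Kl : Matrix (Fin m) (Fin n) ℝ) (Lu Ll : Matrix (Fin n) (Fin p) ℝ)
    (E : Matrix (Fin n) (Fin q) ℝ) (F : Matrix (Fin p) (Fin r) ℝ)
    (z : (Fin n → ℝ) × (Fin n → ℝ) × (Fin n → ℝ)) :
    (Fin n → ℝ) × (Fin n → ℝ) × (Fin n → ℝ) :=
  Gmap A B C Ku Kl Lu Ll z + noiseOffset Lu Ll E F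

/-- The error cone `X_e = {(x, ē, e̲) : x ≥ 0, ē ≥ 0, 0 ≤ e̲ ≤ x entrywise}`. -/
def errorCone (n : ℕ) : Set ((Fin n → ℝ) × (Fin n → ℝ) × (Fin n → ℝ)) :=
  {z | (∀ i, 0 ≤ z.1 i) ∧ (∀ i, 0 ≤ z.2.1 i) ∧ (∀ i, 0 ≤ z.2.2 i) ∧
       (∀ i, z.2.2 i ≤ z.1 i)}

/- ## Auxiliary machinery -/

open scoped ENNReal NNReal

namespace NoisyObs

attribute [local instance] Matrix.linftyOpNormedRing Matrix.linftyOpNormedAlgebra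

variable {ι : Type*} [Fintype ι] [DecidableEq ι]

instance {ι : Type*} [Fintype ι] [DecidableEq ι] : CompleteSpace (Matrix ι ι ℂ) :=
  inferInstanceAs (CompleteSpace (ι → ι → ℂ))

lemma nnnorm_map_ofReal (N : Matrix ι ι ℝ) : ‖N.map (algebraMap ℝ ℂ)‖₊ = ‖N‖₊ := by
  simp only [Matrix.linfty_opNNNorm_def, Matrix.map_apply]
  congr 1; ext i; congr 1
  exact Finset.sum_congr rfl fun j _ => by simp [Complex.nnnorm_real]

lemma map_pow_ofReal (N : Matrix ι ι ℝ) (t : ℕ) :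
    (N.map (algebraMap ℝ ℂ)) ^ t = (N ^ t).map (algebraMap ℝ ℂ) := by
  have := map_pow ((algebraMap ℝ ℂ).mapMatrix (m := ι)) N t
  simpa [RingHom.mapMatrix_apply] using this.symm

/-- Schur stability gives eventual geometric decay of powers in the L∞-operator norm. -/
lemma schur_decay {M : Matrix ι ι ℝ} (h : IsSchur M) :
    ∃ θ : ℝ≥0, θ < 1 ∧ ∀ᶠ t : ℕ in atTop, ‖M ^ t‖₊ ≤ θ ^ t := by
  obtain ⟨θ, hθρ, hθ1⟩ := ENNReal.lt_iff_exists_nnreal_btwn.mp h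
  refine ⟨θ, by exact_mod_cast hθ1, ?_⟩
  have hg := spectrum.pow_nnnorm_pow_one_div_tendsto_nhds_spectralRadius
    (M.map (algebraMap ℝ ℂ))
  have hev : ∀ᶠ t : ℕ in atTop,
      (‖(M.map (algebraMap ℝ ℂ)) ^ t‖₊ : ℝ≥0∞) ^ (1 / (t:ℝ)) < θ :=
    hg.eventually_lt_const hθρ
  filter_upwards [hev, eventually_ge_atTop 1] with t ht ht1
  have htne : (1 / (t:ℝ)) * t = 1 := by field_simp
  have hx : (‖(M.map (algebraMap ℝ ℂ)) ^ t‖₊ : ℝ≥0∞) =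
      ((‖(M.map (algebraMap ℝ ℂ)) ^ t‖₊ : ℝ≥0∞) ^ (1 / (t:ℝ))) ^ (t : ℕ) := by
    rw [← ENNReal.rpow_natCast (_ ^ _), ← ENNReal.rpow_mul, htne, ENNReal.rpow_one]
  have hle : (‖(M.map (algebraMap ℝ ℂ)) ^ t‖₊ : ℝ≥0∞) ≤ (θ : ℝ≥0∞) ^ t := by
    rw [hx]; exact pow_le_pow_left' ht.le t
  rw [map_pow_ofReal, nnnorm_map_ofReal] at hle
  exact_mod_cast hle

/-- If all powers of `M` applied to any vector tend to zero, then `M` is Schur stable. -/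
lemma isSchur_of_tendsto {M : Matrix ι ι ℝ}
    (h : ∀ v : ι → ℝ, Tendsto (fun t => (M ^ t) *ᵥ v) atTop (nhds 0)) : IsSchur M := by
  rcases isEmpty_or_nonempty ι with hι | hι
  · have : Subsingleton (Matrix ι ι ℂ) := ⟨fun a b => by ext i j; exact hι.elim i⟩
    rw [IsSchur, spectrum.SpectralRadius.of_subsingleton]
    exact zero_lt_one
  have hent : ∀ i j : ι, Tendsto (fun t => (M ^ t) i j) atTop (nhds 0) := by
    intro i j
    have h1 := h (Pi.single j 1)
    have h2 : Tendsto (fun t => ((M ^ t) *ᵥ Pi.single j 1) i) atTop (nhds 0) := by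
      have := (continuous_apply i).tendsto (0 : ι → ℝ)
      simpa [Function.comp_def] using this.comp h1
    simpa [Matrix.mulVec_single] using h2
  rw [IsSchur]
  have h1 : (1 : ℝ≥0∞) = ((1 : ℝ≥0) : ℝ≥0∞) := rfl
  rw [h1]
  apply spectrum.spectralRadius_lt_of_forall_lt
  intro z hz
  set a := M.map (algebraMap ℝ ℂ) with ha
  have hdet : (z • (1 : Matrix ι ι ℂ) - a).det = 0 := by
    rw [spectrum.mem_iff] at hz
    by_contra hd
    exact hz (by
      rw [Algebra.algebraMap_eq_smul_one]
      exact (Matrix.isUnit_iff_isUnit_det _).mpr (isUnit_iff_ne_zero.mpr hd))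
  obtain ⟨w, hw0, hww⟩ := (Matrix.exists_mulVec_eq_zero_iff).mpr hdet
  have heig : a *ᵥ w = z • w := by
    have := hww
    rw [Matrix.sub_mulVec, sub_eq_zero] at this
    rw [← this, Matrix.smul_mulVec, Matrix.one_mulVec]
  have hpow : ∀ t : ℕ, (a ^ t) *ᵥ w = z ^ t • w := by
    intro t
    induction t with
    | zero => simp [Matrix.one_mulVec]
    | succ t ih =>
      rw [pow_succ', ← Matrix.mulVec_mulVec, ih, Matrix.mulVec_smul, heig,
        smul_smul, ← pow_succ]
  obtain ⟨j, hj⟩ : ∃ j, w j ≠ 0 := Function.ne_iff.mp hw0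
  have hz0 : Tendsto (fun t : ℕ => z ^ t * w j) atTop (nhds 0) := by
    have hform : ∀ t : ℕ, z ^ t * w j = ∑ k : ι, ((M ^ t) j k : ℂ) * w k := by
      intro t
      have := congrFun (hpow t) j
      simp only [Pi.smul_apply, smul_eq_mul] at this
      rw [← this, ha, map_pow_ofReal]
      simp [Matrix.mulVec, dotProduct, Matrix.map_apply]
    simp only [hform]
    have : Tendsto (fun t => ∑ k : ι, ((M ^ t) j k : ℂ) * w k) atTop
        (nhds (∑ k : ι, (0:ℂ))) := by
      apply tendsto_finset_sum
      intro k _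
      have : Tendsto (fun t => ((M ^ t) j k : ℂ)) atTop (nhds ((0:ℝ):ℂ)) :=
        (Complex.continuous_ofReal.tendsto 0).comp (hent j k)
      simpa using this.mul_const (w k)
    simpa using this
  have habs : Tendsto (fun t : ℕ => ‖z‖ ^ t) atTop (nhds 0) := by
    have h1 : Tendsto (fun t : ℕ => ‖z ^ t * w j‖) atTop (nhds 0) := by
      simpa using hz0.norm
    have h2 : Tendsto (fun t : ℕ => ‖z ^ t * w j‖ / ‖w j‖) atTop (nhds 0) := by
      simpa using h1.div_const ‖w j‖
    have heq : ∀ t : ℕ, ‖z ^ t * w j‖ / ‖w j‖ = ‖z‖ ^ t := by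
      intro t
      rw [norm_mul, norm_pow, mul_div_assoc, div_self (norm_ne_zero_iff.mpr hj), mul_one]
    simpa only [heq] using h2
  have : |‖z‖| < 1 := tendsto_pow_atTop_nhds_zero_iff.mp habs
  rw [abs_of_nonneg (norm_nonneg z)] at this
  exact_mod_cast this

lemma mem_spectrum_iff_det (N : Matrix ι ι ℂ) (z : ℂ) :
    z ∈ spectrum ℂ N ↔ (z • (1 : Matrix ι ι ℂ) - N).det = 0 := by
  rw [spectrum.mem_iff, Algebra.algebraMap_eq_smul_one]
  constructor
  · intro h
    by_contra hd
    exact h ((Matrix.isUnit_iff_isUnit_det _).mpr (isUnit_iff_ne_zero.mpr hd))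
  · intro hd h
    rw [Matrix.isUnit_iff_isUnit_det, hd] at h
    exact not_isUnit_zero h

lemma schur_of_spectrum_lt {M : Matrix ι ι ℝ}
    (h : ∀ z ∈ spectrum ℂ (M.map (algebraMap ℝ ℂ)), ‖z‖₊ < 1) : IsSchur M := by
  rcases isEmpty_or_nonempty ι with hι | hι
  · have : Subsingleton (Matrix ι ι ℂ) := ⟨fun a b => by ext i j; exact hι.elim i⟩
    rw [IsSchur, spectrum.SpectralRadius.of_subsingleton]
    exact zero_lt_one
  · have h1 : (1 : ℝ≥0∞) = ((1 : ℝ≥0) : ℝ≥0∞) := rfl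
    rw [IsSchur, h1]
    exact spectrum.spectralRadius_lt_of_forall_lt _ h

lemma spectrum_lt_of_schur {M : Matrix ι ι ℝ}
    (h : IsSchur M) : ∀ z ∈ spectrum ℂ (M.map (algebraMap ℝ ℂ)), ‖z‖₊ < 1 := by
  intro z hz
  have hle : (‖z‖₊ : ℝ≥0∞) ≤ spectralRadius ℂ (M.map (algebraMap ℝ ℂ)) :=
    le_iSup₂ (f := fun k (_ : k ∈ spectrum ℂ (M.map (algebraMap ℝ ℂ))) => (‖k‖₊ : ℝ≥0∞)) z hz
  have := lt_of_le_of_lt hle h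
  exact_mod_cast this

lemma isSchur_fromBlocks {κ₁ κ₂ : Type*} [Fintype κ₁] [DecidableEq κ₁]
    [Fintype κ₂] [DecidableEq κ₂]
    {A : Matrix κ₁ κ₁ ℝ} (B : Matrix κ₁ κ₂ ℝ) {D : Matrix κ₂ κ₂ ℝ}
    (hA : IsSchur A) (hD : IsSchur D) : IsSchur (Matrix.fromBlocks A B 0 D) := by
  apply schur_of_spectrum_lt
  intro z hz
  rw [mem_spectrum_iff_det] at hz
  have hmap : (Matrix.fromBlocks A B 0 D).map (algebraMap ℝ ℂ) =
      Matrix.fromBlocks (A.map (algebraMap ℝ ℂ)) (B.map (algebraMap ℝ ℂ)) 0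
        (D.map (algebraMap ℝ ℂ)) := by
    rw [Matrix.fromBlocks_map, Matrix.map_zero _ (map_zero _)]
  rw [hmap] at hz
  have hsplit : z • (1 : Matrix (κ₁ ⊕ κ₂) (κ₁ ⊕ κ₂) ℂ) -
      Matrix.fromBlocks (A.map (algebraMap ℝ ℂ)) (B.map (algebraMap ℝ ℂ)) 0
        (D.map (algebraMap ℝ ℂ)) =
      Matrix.fromBlocks (z • 1 - A.map (algebraMap ℝ ℂ)) (0 - B.map (algebraMap ℝ ℂ)) (0 - 0)
        (z • 1 - D.map (algebraMap ℝ ℂ)) := by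
    rw [← Matrix.fromBlocks_one, Matrix.fromBlocks_smul]
    rw [sub_eq_add_neg, Matrix.fromBlocks_neg, Matrix.fromBlocks_add]
    congr 1 <;> simp [sub_eq_add_neg]
  rw [hsplit] at hz
  simp only [sub_zero, zero_sub] at hz
  rw [Matrix.det_fromBlocks_zero₂₁] at hz
  rcases mul_eq_zero.mp hz with h0 | h0
  · exact spectrum_lt_of_schur hA z ((mem_spectrum_iff_det _ _).mpr h0)
  · exact spectrum_lt_of_schur hD z ((mem_spectrum_iff_det _ _).mpr h0)

/- ## entrywise positivity helpers -/

lemma mulVec_nonneg {κ : Type*} [Fintype κ] {M : Matrix ι κ ℝ} {v : κ → ℝ}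
    (hM : ∀ i j, 0 ≤ M i j) (hv : ∀ j, 0 ≤ v j) : ∀ i, 0 ≤ (M *ᵥ v) i := fun i =>
  Finset.sum_nonneg fun j _ => mul_nonneg (hM i j) (hv j)

lemma lin_nonneg {a c : ℝ} (h : ∀ t : ℝ, 0 ≤ t → 0 ≤ t * a + c) : 0 ≤ a := by
  by_contra ha
  push_neg at ha
  have hc : 0 ≤ c := by simpa using h 0 le_rfl
  have hna : 0 < -a := by linarith
  have ht : (0:ℝ) ≤ (c + 1) / (-a) := le_of_lt (by positivity)
  have h2 := h _ ht
  have hval : (c + 1) / (-a) * a = -(c + 1) := by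
    rw [div_mul_eq_mul_div, div_eq_iff (ne_of_gt hna)]; ring
  rw [hval] at h2
  linarith

/- ## The big matrix, embedding and iteration -/

/-- The `3n × 3n` closed-loop matrix `G` as a block matrix. -/
def bigG (M1 P Q M2 M3 : Matrix ι ι ℝ) : Matrix (ι ⊕ (ι ⊕ ι)) (ι ⊕ (ι ⊕ ι)) ℝ :=
  Matrix.fromBlocks M1 (Matrix.fromCols P (-Q)) 0 (Matrix.fromBlocks M2 0 0 M3)

/-- Identify a triple of vectors with a single long vector. -/
def emb (z : (ι → ℝ) × (ι → ℝ) × (ι → ℝ)) : ι ⊕ (ι ⊕ ι) → ℝ :=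
  Sum.elim z.1 (Sum.elim z.2.1 z.2.2)

/-- Inverse of `emb`. -/
def projV (w : ι ⊕ (ι ⊕ ι) → ℝ) : (ι → ℝ) × (ι → ℝ) × (ι → ℝ) :=
  (fun i => w (.inl i), fun i => w (.inr (.inl i)), fun i => w (.inr (.inr i)))

lemma projV_emb (z : (ι → ℝ) × (ι → ℝ) × (ι → ℝ)) : projV (emb z) = z := rfl

lemma emb_add (a b : (ι → ℝ) × (ι → ℝ) × (ι → ℝ)) : emb (a + b) = emb a + emb b := by
  funext i
  rcases i with i | i | i <;> rfl

lemma emb_zero : emb (0 : (ι → ℝ) × (ι → ℝ) × (ι → ℝ)) = 0 := by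
  funext i
  rcases i with i | i | i <;> rfl

lemma continuous_emb : Continuous (emb (ι := ι)) := by
  apply continuous_pi
  intro i
  rcases i with i | i | i
  · exact (continuous_apply i).comp continuous_fst
  · exact (continuous_apply i).comp (continuous_fst.comp continuous_snd)
  · exact (continuous_apply i).comp (continuous_snd.comp continuous_snd)

lemma continuous_projV : Continuous (projV (ι := ι)) := by
  refine Continuous.prodMk ?_ (Continuous.prodMk ?_ ?_) <;>
    exact continuous_pi fun i => continuous_apply _

lemma bigG_mulVec (M1 P Q M2 M3 : Matrix ι ι ℝ) (z : (ι → ℝ) × (ι → ℝ) × (ι → ℝ)) :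
    bigG M1 P Q M2 M3 *ᵥ emb z =
      emb (M1 *ᵥ z.1 + P *ᵥ z.2.1 - Q *ᵥ z.2.2, M2 *ᵥ z.2.1, M3 *ᵥ z.2.2) := by
  rw [bigG, emb, Matrix.fromBlocks_mulVec]
  have h1 : (Sum.elim z.1 (Sum.elim z.2.1 z.2.2)) ∘ Sum.inl = z.1 := rfl
  have h2 : (Sum.elim z.1 (Sum.elim z.2.1 z.2.2)) ∘ Sum.inr = Sum.elim z.2.1 z.2.2 := rfl
  rw [h1, h2, Matrix.fromBlocks_mulVec]
  have h3 : (Sum.elim z.2.1 z.2.2) ∘ Sum.inl = z.2.1 := rfl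
  have h4 : (Sum.elim z.2.1 z.2.2) ∘ Sum.inr = z.2.2 := rfl
  rw [h3, h4, Matrix.fromCols_mulVec_sumElim]
  simp only [Matrix.zero_mulVec, Matrix.mulVec_zero, add_zero, zero_add, Matrix.neg_mulVec]
  have habel : M1 *ᵥ z.1 + P *ᵥ z.2.1 - Q *ᵥ z.2.2 =
      M1 *ᵥ z.1 + (P *ᵥ z.2.1 + -(Q *ᵥ z.2.2)) := by abel
  rw [emb, habel]

/-- Powers of the block-triangular matrix have block-triangular form with powered diagonal. -/
lemma bigG_pow (M1 P Q M2 M3 : Matrix ι ι ℝ) (t : ℕ) :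
    ∃ Rt : Matrix ι (ι ⊕ ι) ℝ,
      (bigG M1 P Q M2 M3) ^ t =
        Matrix.fromBlocks (M1 ^ t) Rt 0 (Matrix.fromBlocks (M2 ^ t) 0 0 (M3 ^ t)) := by
  induction t with
  | zero =>
    refine ⟨0, ?_⟩
    simp [Matrix.fromBlocks_one]
  | succ t ih =>
    obtain ⟨Rt, hRt⟩ := ih
    refine ⟨M1 ^ t * Matrix.fromCols P (-Q) + Rt * Matrix.fromBlocks M2 0 0 M3, ?_⟩
    rw [pow_succ, hRt, bigG, Matrix.fromBlocks_multiply]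
    simp only [Matrix.mul_zero, Matrix.zero_mul, add_zero, zero_add]
    rw [Matrix.fromBlocks_multiply]
    simp only [Matrix.mul_zero, Matrix.zero_mul, add_zero, zero_add, ← pow_succ]

/-- Iterates of the affine map `w ↦ G w + d`. -/
lemma affine_iter {κ : Type*} [Fintype κ] [DecidableEq κ]
    (G : Matrix κ κ ℝ) (d : κ → ℝ) (t : ℕ) (w : κ → ℝ) :
    (fun w => G *ᵥ w + d)^[t] w = G ^ t *ᵥ w + ∑ k ∈ Finset.range t, G ^ k *ᵥ d := by
  induction t with
  | zero => simp [Matrix.one_mulVec]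
  | succ t ih =>
    rw [Function.iterate_succ_apply', ih]
    have hsum : G *ᵥ (∑ k ∈ Finset.range t, G ^ k *ᵥ d) =
        ∑ k ∈ Finset.range t, G ^ (k + 1) *ᵥ d := by
      rw [← Matrix.mulVecLin_apply, map_sum]
      refine Finset.sum_congr rfl fun k _ => ?_
      rw [Matrix.mulVecLin_apply, Matrix.mulVec_mulVec, ← pow_succ']
    rw [Matrix.mulVec_add, hsum, Matrix.mulVec_mulVec, ← pow_succ']
    rw [Finset.sum_range_succ' (fun k => G ^ k *ᵥ d)]
    simp [Matrix.one_mulVec, add_assoc]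

lemma isClosed_errorCone (n : ℕ) : IsClosed (errorCone n) := by
  have : errorCone n =
      (⋂ i, {z : (Fin n → ℝ) × (Fin n → ℝ) × (Fin n → ℝ) | 0 ≤ z.1 i}) ∩
      ((⋂ i, {z : (Fin n → ℝ) × (Fin n → ℝ) × (Fin n → ℝ) | 0 ≤ z.2.1 i}) ∩
      ((⋂ i, {z : (Fin n → ℝ) × (Fin n → ℝ) × (Fin n → ℝ) | 0 ≤ z.2.2 i}) ∩
      (⋂ i, {z : (Fin n → ℝ) × (Fin n → ℝ) × (Fin n → ℝ) | z.2.2 i ≤ z.1 i}))) := by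
    ext z
    simp [errorCone, Set.mem_iInter, forall_and]
  rw [this]
  refine IsClosed.inter ?_ (IsClosed.inter ?_ (IsClosed.inter ?_ ?_)) <;>
    refine isClosed_iInter fun i => ?_
  · exact isClosed_le continuous_const ((continuous_apply i).comp continuous_fst)
  · exact isClosed_le continuous_const
      ((continuous_apply i).comp (continuous_fst.comp continuous_snd))
  · exact isClosed_le continuous_const
      ((continuous_apply i).comp (continuous_snd.comp continuous_snd))
  · exact isClosed_le ((continuous_apply i).comp (continuous_snd.comp continuous_snd))
      ((continuous_apply i).comp continuous_fst)

end NoisyObs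

open NoisyObs

attribute [local instance] Matrix.linftyOpNormedRing Matrix.linftyOpNormedAlgebra

/-- **Theorem 2.** For the expected error dynamics `f(z) = Gz + d` of the noisy system,
Schur stability of the three diagonal blocks together with the six inequalities of
Lemma 1 and the three noise inequalities is equivalent to invariance of `X_e` under `f`
together with asymptotic convergence of all iterates started in `X_e` to a fixed point
`X* ∈ X_e`. -/
theorem noisy_positive_observer_iff {n m p q r : ℕ}
    (A : Matrix (Fin n) (Fin n) ℝ) (B : Matrix (Fin n) (Fin m) ℝ)
    (C : Matrix (Fin p) (Fin n) ℝ)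
    (Ku Kl : Matrix (Fin m) (Fin n) ℝ) (Lu Ll : Matrix (Fin n) (Fin p) ℝ)
    (E : Matrix (Fin n) (Fin q) ℝ) (F : Matrix (Fin p) (Fin r) ℝ)
    (hE : ∀ i j, 0 ≤ E i j) :
    (IsSchur (A + B * (Ku + Kl)) ∧ IsSchur (A - Lu * C) ∧ IsSchur (A - Ll * C) ∧
     (∀ i j, 0 ≤ (A + B * (Ku + Kl)) i j) ∧
     (∀ i j, 0 ≤ (A + B * Ku) i j) ∧
     (∀ i j, 0 ≤ (B * Ku) i j) ∧
     (∀ i j, 0 ≤ (A - Lu * C) i j) ∧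
     (∀ i j, 0 ≤ (A - Ll * C) i j) ∧
     (∀ i j, 0 ≤ (B * Ku + Ll * C) i j) ∧
     (∀ i, 0 ≤ ((Lu * F) *ᵥ (fun _ => (1 : ℝ)) - E *ᵥ (fun _ => (1 : ℝ))) i) ∧
     (∀ i, 0 ≤ (E *ᵥ (fun _ => (1 : ℝ)) - (Ll * F) *ᵥ (fun _ => (1 : ℝ))) i) ∧
     (∀ i, 0 ≤ ((Ll * F) *ᵥ (fun _ => (1 : ℝ))) i)) ↔
    ((∀ z ∈ errorCone n, noisyMap A B C Ku Kl Lu Ll E F z ∈ errorCone n) ∧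
     ∃ Xstar ∈ errorCone n, ∀ z₀ ∈ errorCone n,
        Tendsto (fun t => (noisyMap A B C Ku Kl Lu Ll E F)^[t] z₀) atTop (nhds Xstar)) := by
  classical
  set M1 := A + B * (Ku + Kl) with hM1def
  set P := B * Ku with hPdef
  set Q := B * Kl with hQdef
  set M2 := A - Lu * C with hM2def
  set M3 := A - Ll * C with hM3def
  set f := noisyMap A B C Ku Kl Lu Ll E F with hfdef
  set G : Matrix (Fin n ⊕ (Fin n ⊕ Fin n)) (Fin n ⊕ (Fin n ⊕ Fin n)) ℝ :=
    bigG M1 P Q M2 M3 with hGdef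
  set d : Fin n ⊕ (Fin n ⊕ Fin n) → ℝ := emb (noiseOffset Lu Ll E F) with hddef
  -- basic matrix identities
  have idQ : Q = M1 - (A + P) := by
    rw [hQdef, hM1def, hPdef, Matrix.mul_add]; abel
  have idM3 : M3 = M1 - Q - (P + Ll * C) := by
    rw [hM3def, hM1def, hQdef, hPdef, Matrix.mul_add]; abel
  -- conjugation of the dynamics
  have hconj : ∀ z, emb (f z) = G *ᵥ emb z + d := by
    intro z
    rw [hfdef, noisyMap, emb_add, hGdef, bigG_mulVec]
    rfl
  have hsemi : Function.Semiconj emb f (fun w => G *ᵥ w + d) := fun z => hconj z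
  have hiter : ∀ (t : ℕ) z, emb (f^[t] z) = G ^ t *ᵥ emb z +
      ∑ k ∈ Finset.range t, G ^ k *ᵥ d := by
    intro t z
    have := (hsemi.iterate_right t) z
    rw [this, affine_iter]
  constructor
  · -- (i) → (ii)
    rintro ⟨hS1, hS2, hS3, hN1, hN2, hN3, hN4, hN5, hN6, hd1, hd2, hd3⟩
    have hE1 : ∀ i, 0 ≤ (E *ᵥ (fun _ => (1:ℝ))) i :=
      mulVec_nonneg hE (fun _ => zero_le_one)
    -- invariance
    have hinv : ∀ z ∈ errorCone n, f z ∈ errorCone n := by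
      rintro ⟨x, e1, e2⟩ ⟨hx, he1, he2, hle⟩
      have hxe : ∀ i, 0 ≤ (x - e2) i := fun i => by
        simpa using sub_nonneg.mpr (hle i)
      have hfz : f (x, e1, e2) =
          (M1 *ᵥ x + P *ᵥ e1 - Q *ᵥ e2 + E *ᵥ (fun _ => 1),
           M2 *ᵥ e1 + ((Lu * F) *ᵥ (fun _ => 1) - E *ᵥ (fun _ => 1)),
           M3 *ᵥ e2 + (E *ᵥ (fun _ => 1) - (Ll * F) *ᵥ (fun _ => 1))) := rfl
      rw [hfz]
      have hfirst : M1 *ᵥ x + P *ᵥ e1 - Q *ᵥ e2 + E *ᵥ (fun _ => (1:ℝ)) =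
          M1 *ᵥ (x - e2) + ((A + P) *ᵥ e2 + (P *ᵥ e1 + E *ᵥ (fun _ => 1))) := by
        rw [Matrix.mulVec_sub]
        rw [idQ, Matrix.sub_mulVec]
        abel
      refine ⟨?_, ?_, ?_, ?_⟩
      · intro i
        rw [hfirst]
        have t1 := mulVec_nonneg hN1 hxe i
        have t2 := mulVec_nonneg hN2 he2 i
        have t3 := mulVec_nonneg hN3 he1 i
        have t4 := hE1 i
        simp only [Pi.add_apply]
        rw [hM1def] at t1 ⊢
        rw [hPdef] at t2 t3 ⊢
        positivity
      · intro i
        have t1 := mulVec_nonneg hN4 he1 i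
        have t2 := hd1 i
        simp only [Pi.add_apply]
        rw [hM2def] at t1 ⊢
        positivity
      · intro i
        have t1 := mulVec_nonneg hN5 he2 i
        have t2 := hd2 i
        simp only [Pi.add_apply]
        rw [hM3def] at t1 ⊢
        positivity
      · intro i
        have hdiff : (M1 *ᵥ x + P *ᵥ e1 - Q *ᵥ e2 + E *ᵥ (fun _ => (1:ℝ))) -
            (M3 *ᵥ e2 + (E *ᵥ (fun _ => (1:ℝ)) - (Ll * F) *ᵥ (fun _ => 1))) =
            M1 *ᵥ (x - e2) + ((P + Ll * C) *ᵥ e2 +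
              (P *ᵥ e1 + (Ll * F) *ᵥ (fun _ => 1))) := by
          rw [Matrix.mulVec_sub, idM3, Matrix.sub_mulVec, Matrix.sub_mulVec]
          abel
        have hge : 0 ≤ ((M1 *ᵥ x + P *ᵥ e1 - Q *ᵥ e2 + E *ᵥ (fun _ => (1:ℝ))) -
            (M3 *ᵥ e2 + (E *ᵥ (fun _ => (1:ℝ)) - (Ll * F) *ᵥ (fun _ => 1)))) i := by
          rw [hdiff]
          have t1 := mulVec_nonneg hN1 hxe i
          have t2 := mulVec_nonneg hN6 he2 i
          have t3 := mulVec_nonneg hN3 he1 i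
          have t4 := hd3 i
          simp only [Pi.add_apply]
          rw [hM1def] at t1 ⊢
          rw [hPdef] at t2 t3 ⊢
          positivity
        simp only [Pi.sub_apply, Pi.add_apply] at hge ⊢
        linarith
    refine ⟨hinv, ?_⟩
    -- convergence
    have hSG : IsSchur G := by
      rw [hGdef, bigG]
      exact isSchur_fromBlocks _ hS1 (isSchur_fromBlocks _ hS2 hS3)
    obtain ⟨θ, hθ1, hθev⟩ := schur_decay hSG
    have hθR : (θ : ℝ) < 1 := by exact_mod_cast hθ1
    have hpow0 : ∀ w : Fin n ⊕ (Fin n ⊕ Fin n) → ℝ,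
        Tendsto (fun t => G ^ t *ᵥ w) atTop (nhds 0) := by
      intro w
      have hb : Tendsto (fun t : ℕ => (θ:ℝ) ^ t * ‖w‖) atTop (nhds 0) := by
        simpa using
          (tendsto_pow_atTop_nhds_zero_of_lt_one θ.coe_nonneg hθR).mul_const ‖w‖
      refine squeeze_zero_norm' ?_ hb
      filter_upwards [hθev] with t ht
      calc ‖G ^ t *ᵥ w‖ ≤ ‖G ^ t‖ * ‖w‖ := Matrix.linfty_opNorm_mulVec _ _
      _ ≤ (θ:ℝ) ^ t * ‖w‖ := by
          apply mul_le_mul_of_nonneg_right _ (norm_nonneg w)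
          exact_mod_cast ht
    have hsummable : Summable (fun k => G ^ k *ᵥ d) := by
      refine Summable.of_norm_bounded_eventually_nat (g := fun k => (θ:ℝ) ^ k * ‖d‖) ?_ ?_
      · exact (summable_geometric_of_lt_one θ.coe_nonneg hθR).mul_right _
      · filter_upwards [hθev] with t ht
        calc ‖G ^ t *ᵥ d‖ ≤ ‖G ^ t‖ * ‖d‖ := Matrix.linfty_opNorm_mulVec _ _
        _ ≤ (θ:ℝ) ^ t * ‖d‖ := by
            apply mul_le_mul_of_nonneg_right _ (norm_nonneg d)
            exact_mod_cast ht
    set S : Fin n ⊕ (Fin n ⊕ Fin n) → ℝ := ∑' k, G ^ k *ᵥ d with hSdef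
    have htendS : Tendsto (fun t => ∑ k ∈ Finset.range t, G ^ k *ᵥ d) atTop (nhds S) :=
      hsummable.hasSum.tendsto_sum_nat
    have hembt : ∀ z₀, Tendsto (fun t => emb (f^[t] z₀)) atTop (nhds S) := by
      intro z₀
      have : Tendsto (fun t => G ^ t *ᵥ emb z₀ + ∑ k ∈ Finset.range t, G ^ k *ᵥ d)
          atTop (nhds (0 + S)) := (hpow0 (emb z₀)).add htendS
      rw [zero_add] at this
      exact this.congr fun t => (hiter t z₀).symm
    have hmain : ∀ z₀, Tendsto (fun t => f^[t] z₀) atTop (nhds (projV S)) := by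
      intro z₀
      have := (continuous_projV.tendsto S).comp (hembt z₀)
      exact this.congr fun t => by rw [Function.comp_apply, projV_emb]
    refine ⟨projV S, ?_, fun z₀ _ => hmain z₀⟩
    -- the fixed point lies in the cone
    have hzero_mem : (0 : (Fin n → ℝ) × (Fin n → ℝ) × (Fin n → ℝ)) ∈ errorCone n := by
      refine ⟨fun i => le_rfl, fun i => le_rfl, fun i => le_rfl, fun i => le_rfl⟩
    have hiter_mem : ∀ t : ℕ, f^[t] 0 ∈ errorCone n := by
      intro t
      induction t with
      | zero => exact hzero_mem
      | succ t ih => rw [Function.iterate_succ_apply']; exact hinv _ ih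
    exact (isClosed_errorCone n).mem_of_tendsto (hmain 0)
      (Eventually.of_forall hiter_mem)
  · -- (ii) → (i)
    rintro ⟨hinv, Xstar, hXmem, hconv⟩
    -- cone membership of test points
    have hmem1 : ∀ (v : Fin n → ℝ), (∀ i, 0 ≤ v i) → (v, 0, 0) ∈ errorCone n :=
      fun v hv => ⟨hv, fun i => le_rfl, fun i => le_rfl, fun i => hv i⟩
    have hmem2 : ∀ (v : Fin n → ℝ), (∀ i, 0 ≤ v i) → ((0 : Fin n → ℝ), v, 0) ∈ errorCone n :=
      fun v hv => ⟨fun i => le_rfl, hv, fun i => le_rfl, fun i => le_rfl⟩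
    have hmem3 : ∀ (v : Fin n → ℝ), (∀ i, 0 ≤ v i) → (v, 0, v) ∈ errorCone n :=
      fun v hv => ⟨hv, fun i => le_rfl, hv, fun i => le_rfl⟩
    have hsingle : ∀ (j : Fin n) (t : ℝ), 0 ≤ t → ∀ i, 0 ≤ (t • (Pi.single j 1 : Fin n → ℝ)) i := by
      intro j t ht i
      simp only [Pi.smul_apply, smul_eq_mul]
      apply mul_nonneg ht
      rcases eq_or_ne i j with h | h
      · subst h; simp
      · simp [Pi.single_apply, h]
    -- the twelve inequalities -----------------------------------------------
    -- f(0) components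
    have hzero_mem : (0 : (Fin n → ℝ) × (Fin n → ℝ) × (Fin n → ℝ)) ∈ errorCone n :=
      ⟨fun i => le_rfl, fun i => le_rfl, fun i => le_rfl, fun i => le_rfl⟩
    have hf0 := hinv 0 hzero_mem
    have hf0eq : f 0 = noiseOffset Lu Ll E F := by
      rw [hfdef]
      show Gmap A B C Ku Kl Lu Ll 0 + noiseOffset Lu Ll E F = _
      have hg0 : Gmap A B C Ku Kl Lu Ll 0 = 0 := by
        simp [Gmap, Matrix.mulVec_zero, Prod.ext_iff]
      rw [hg0, zero_add]
    rw [hf0eq] at hf0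
    obtain ⟨hf01, hf02, hf03, hf04⟩ := hf0
    have hd1 : ∀ i, 0 ≤ ((Lu * F) *ᵥ (fun _ => (1:ℝ)) - E *ᵥ (fun _ => (1:ℝ))) i := hf02
    have hd2 : ∀ i, 0 ≤ (E *ᵥ (fun _ => (1:ℝ)) - (Ll * F) *ᵥ (fun _ => (1:ℝ))) i := hf03
    have hd3 : ∀ i, 0 ≤ ((Ll * F) *ᵥ (fun _ => (1:ℝ))) i := by
      intro i
      have := hf04 i
      simp only [noiseOffset, Pi.sub_apply] at this
      linarith
    -- test family 1 : (t • single, 0, 0)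
    have hN1 : ∀ i j, 0 ≤ M1 i j := by
      intro i j
      apply lin_nonneg (c := (E *ᵥ (fun _ => (1:ℝ))) i)
      intro t ht
      have hmem := hinv _ (hmem1 _ (hsingle j t ht))
      have := hmem.1 i
      rw [hfdef, noisyMap, Gmap] at this
      simp only [noiseOffset, Matrix.mulVec_zero, Matrix.mulVec_smul,
        Matrix.mulVec_single, MulOpposite.op_one, one_smul, Matrix.col_apply, Prod.fst_add, Pi.add_apply, Pi.sub_apply, Pi.smul_apply,
        sub_zero, add_zero, smul_eq_mul, mul_one, Pi.zero_apply] at this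
      rw [← hM1def] at this
      linarith
    -- test family 2 : (0, t • single, 0)
    have hN3 : ∀ i j, 0 ≤ P i j := by
      intro i j
      apply lin_nonneg (c := (E *ᵥ (fun _ => (1:ℝ))) i)
      intro t ht
      have hmem := hinv _ (hmem2 _ (hsingle j t ht))
      have := hmem.1 i
      rw [hfdef, noisyMap, Gmap] at this
      simp only [noiseOffset, Matrix.mulVec_zero, Matrix.mulVec_smul,
        Matrix.mulVec_single, MulOpposite.op_one, one_smul, Matrix.col_apply, Prod.fst_add, Pi.add_apply, Pi.sub_apply, Pi.smul_apply,
        sub_zero, add_zero, zero_add, smul_eq_mul, mul_one, Pi.zero_apply] at this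
      rw [← hPdef] at this
      linarith
    have hN4 : ∀ i j, 0 ≤ M2 i j := by
      intro i j
      apply lin_nonneg (c := ((Lu * F) *ᵥ (fun _ => (1:ℝ)) - E *ᵥ (fun _ => (1:ℝ))) i)
      intro t ht
      have hmem := hinv _ (hmem2 _ (hsingle j t ht))
      have := hmem.2.1 i
      rw [hfdef, noisyMap, Gmap] at this
      simp only [noiseOffset, Matrix.mulVec_zero, Matrix.mulVec_smul,
        Matrix.mulVec_single, MulOpposite.op_one, one_smul, Matrix.col_apply, Prod.snd_add, Prod.fst_add, Pi.add_apply, Pi.sub_apply,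
        Pi.smul_apply, smul_eq_mul, mul_one, Pi.zero_apply] at this
      rw [← hM2def] at this
      simp only [Pi.sub_apply]
      linarith
    -- test family 3 : (t • single, 0, t • single)
    have hN5 : ∀ i j, 0 ≤ M3 i j := by
      intro i j
      apply lin_nonneg (c := (E *ᵥ (fun _ => (1:ℝ)) - (Ll * F) *ᵥ (fun _ => (1:ℝ))) i)
      intro t ht
      have hmem := hinv _ (hmem3 _ (hsingle j t ht))
      have := hmem.2.2.1 i
      rw [hfdef, noisyMap, Gmap] at this
      simp only [noiseOffset, Matrix.mulVec_zero, Matrix.mulVec_smul,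
        Matrix.mulVec_single, MulOpposite.op_one, one_smul, Matrix.col_apply, Prod.snd_add, Prod.fst_add, Pi.add_apply, Pi.sub_apply,
        Pi.smul_apply, smul_eq_mul, mul_one, Pi.zero_apply] at this
      rw [← hM3def] at this
      simp only [Pi.sub_apply]
      linarith
    have hN2 : ∀ i j, 0 ≤ (A + B * Ku) i j := by
      intro i j
      have hAP : A + B * Ku = M1 - Q := by
        rw [idQ, hPdef]; abel
      rw [hAP]
      apply lin_nonneg (c := (E *ᵥ (fun _ => (1:ℝ))) i)
      intro t ht
      have hmem := hinv _ (hmem3 _ (hsingle j t ht))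
      have := hmem.1 i
      rw [hfdef, noisyMap, Gmap] at this
      simp only [noiseOffset, Matrix.mulVec_zero, Matrix.mulVec_smul,
        Matrix.mulVec_single, MulOpposite.op_one, one_smul, Matrix.col_apply, Prod.fst_add, Pi.add_apply, Pi.sub_apply, Pi.smul_apply,
        add_zero, smul_eq_mul, mul_one, Pi.zero_apply] at this
      rw [← hM1def, ← hQdef] at this
      have h2 : 0 ≤ t * (M1 i j - Q i j) + (E *ᵥ fun _ => (1:ℝ)) i := by
        rw [mul_sub]; linarith
      simpa using h2
    have hN6 : ∀ i j, 0 ≤ (B * Ku + Ll * C) i j := by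
      intro i j
      have hBL : B * Ku + Ll * C = M1 - Q - M3 := by
        rw [idM3, hPdef]; abel
      rw [hBL]
      apply lin_nonneg (c := ((Ll * F) *ᵥ (fun _ => (1:ℝ))) i)
      intro t ht
      have hmem := hinv _ (hmem3 _ (hsingle j t ht))
      have hfirst := hmem.1 i
      have hfour := hmem.2.2.2 i
      rw [hfdef, noisyMap, Gmap] at hfour
      simp only [noiseOffset, Matrix.mulVec_zero, Matrix.mulVec_smul,
        Matrix.mulVec_single, MulOpposite.op_one, one_smul, Matrix.col_apply, Prod.snd_add, Prod.fst_add, Pi.add_apply, Pi.sub_apply,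
        Pi.smul_apply, add_zero, smul_eq_mul, mul_one, Pi.zero_apply] at hfour
      rw [← hM1def, ← hQdef, ← hM3def] at hfour
      have h2 : 0 ≤ t * (M1 i j - Q i j - M3 i j) + ((Ll * F) *ᵥ fun _ => (1:ℝ)) i := by
        rw [mul_sub, mul_sub]; linarith
      simpa using h2
    -- Schur stability --------------------------------------------------------
    have hGlim : ∀ z₀ ∈ errorCone n,
        Tendsto (fun t => G ^ t *ᵥ emb z₀) atTop (nhds 0) := by
      intro z₀ hz₀
      have h1 : Tendsto (fun t => emb (f^[t] z₀)) atTop (nhds (emb Xstar)) :=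
        (continuous_emb.tendsto Xstar).comp (hconv z₀ hz₀)
      have h2 : Tendsto (fun t => emb (f^[t] 0)) atTop (nhds (emb Xstar)) :=
        (continuous_emb.tendsto Xstar).comp (hconv 0 hzero_mem)
      have h3 := h1.sub h2
      rw [sub_self] at h3
      apply h3.congr
      intro t
      rw [hiter t z₀, hiter t 0, emb_zero, Matrix.mulVec_zero, zero_add]
      abel
    -- extract per-block limits
    have hblock1 : ∀ v : Fin n → ℝ, (∀ i, 0 ≤ v i) →
        Tendsto (fun t => M1 ^ t *ᵥ v) atTop (nhds 0) := by
      intro v hv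
      have h := hGlim _ (hmem1 v hv)
      rw [tendsto_pi_nhds]
      intro i
      have := ((continuous_apply (Sum.inl i : Fin n ⊕ (Fin n ⊕ Fin n))).tendsto
        (0 : Fin n ⊕ (Fin n ⊕ Fin n) → ℝ)).comp h
      simp only [Function.comp_def, Pi.zero_apply] at this ⊢
      apply this.congr
      intro t
      obtain ⟨Rt, hRt⟩ := bigG_pow M1 P Q M2 M3 t
      rw [hGdef, hRt]
      simp [emb, Matrix.fromBlocks_mulVec, Sum.elim_comp_inl, Sum.elim_comp_inr,
        Matrix.mulVec_zero, Matrix.zero_mulVec]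
    have hblock2 : ∀ v : Fin n → ℝ, (∀ i, 0 ≤ v i) →
        Tendsto (fun t => M2 ^ t *ᵥ v) atTop (nhds 0) := by
      intro v hv
      have h := hGlim _ (hmem2 v hv)
      rw [tendsto_pi_nhds]
      intro i
      have := ((continuous_apply (Sum.inr (Sum.inl i) : Fin n ⊕ (Fin n ⊕ Fin n))).tendsto
        (0 : Fin n ⊕ (Fin n ⊕ Fin n) → ℝ)).comp h
      simp only [Function.comp_def, Pi.zero_apply] at this ⊢
      apply this.congr
      intro t
      obtain ⟨Rt, hRt⟩ := bigG_pow M1 P Q M2 M3 t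
      rw [hGdef, hRt]
      simp [emb, Matrix.fromBlocks_mulVec, Sum.elim_comp_inl, Sum.elim_comp_inr,
        Matrix.mulVec_zero, Matrix.zero_mulVec]
    have hblock3 : ∀ v : Fin n → ℝ, (∀ i, 0 ≤ v i) →
        Tendsto (fun t => M3 ^ t *ᵥ v) atTop (nhds 0) := by
      intro v hv
      have h := hGlim _ (hmem3 v hv)
      rw [tendsto_pi_nhds]
      intro i
      have := ((continuous_apply (Sum.inr (Sum.inr i) : Fin n ⊕ (Fin n ⊕ Fin n))).tendsto
        (0 : Fin n ⊕ (Fin n ⊕ Fin n) → ℝ)).comp h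
      simp only [Function.comp_def, Pi.zero_apply] at this ⊢
      apply this.congr
      intro t
      obtain ⟨Rt, hRt⟩ := bigG_pow M1 P Q M2 M3 t
      rw [hGdef, hRt]
      simp [emb, Matrix.fromBlocks_mulVec, Sum.elim_comp_inl, Sum.elim_comp_inr,
        Matrix.mulVec_zero, Matrix.zero_mulVec]
    -- split arbitrary vectors into positive and negative parts
    have hsplit : ∀ (N : Matrix (Fin n) (Fin n) ℝ),
        (∀ v : Fin n → ℝ, (∀ i, 0 ≤ v i) → Tendsto (fun t => N ^ t *ᵥ v) atTop (nhds 0)) →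
        ∀ v : Fin n → ℝ, Tendsto (fun t => N ^ t *ᵥ v) atTop (nhds 0) := by
      intro N hN v
      set vp : Fin n → ℝ := fun i => max (v i) 0 with hvp
      set vm : Fin n → ℝ := fun i => max (-v i) 0 with hvm
      have hvpn : ∀ i, 0 ≤ vp i := fun i => le_max_right _ _
      have hvmn : ∀ i, 0 ≤ vm i := fun i => le_max_right _ _
      have hvdecomp : v = vp - vm := by
        funext i
        simp only [hvp, hvm, Pi.sub_apply]
        rcases le_total (v i) 0 with h | h
        · rw [max_eq_right h, max_eq_left (by linarith)]; ring
        · rw [max_eq_left h, max_eq_right (by linarith)]; ring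
      have := (hN vp hvpn).sub (hN vm hvmn)
      rw [sub_self] at this
      apply this.congr
      intro t
      rw [hvdecomp, Matrix.mulVec_sub]
    exact ⟨isSchur_of_tendsto (hsplit M1 hblock1),
           isSchur_of_tendsto (hsplit M2 hblock2),
           isSchur_of_tendsto (hsplit M3 hblock3),
           hN1, hN2, hN3, hN4, hN5, hN6, hd1, hd2, hd3⟩
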